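/- For an integer N ≥ 3, let P be the cyclic random-walk transition matrix on ℤ/Nℤ, and let λ⁰ be any vector of nonnegative real numbers on ℤ/Nℤ with Σ_i λ⁰_i = K, where K > 0. Define λⁿ_j = Σ_i λ⁰_i (P^n)(i,j). Then for every n ≥ 1 and every state j, |λⁿ_j − K/N| ≤ K·ε_n, where ε_n = ((3^{N−1} − 1)/3^{N−1})^{(n/(N−1))−1} (real exponent). -/

import Mathlib

set_option linter.unusedVariables false
set_option linter.unusedTactic false

/-- The cyclic random-walk transition matrix on `ℤ/Nℤ`:
`P i j = 1/3` if `j ∈ {i−1, i, i+1}` and `0` otherwise. -/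
noncomputable def cyclicRW (N : ℕ) : Matrix (ZMod N) (ZMod N) ℝ :=
  fun i j => if j = i - 1 ∨ j = i ∨ j = i + 1 then 1 / 3 else 0

section aux
variable {N : ℕ} [NeZero N]

variable {N : ℕ} [NeZero N]

omit [NeZero N] in
lemma cyclicRW_nonneg (i j : ZMod N) : 0 ≤ cyclicRW N i j := by
  unfold cyclicRW; split <;> norm_num

omit [NeZero N] in
lemma cyclicRW_symm (i j : ZMod N) : cyclicRW N i j = cyclicRW N j i := by
  unfold cyclicRW
  congr 1
  rw [eq_iff_iff]
  constructor
  · rintro (h | h | h)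
    · right; right; rw [h]; ring
    · right; left; exact h.symm
    · left; rw [h]; ring
  · rintro (h | h | h)
    · right; right; rw [h]; ring
    · right; left; exact h.symm
    · left; rw [h]; ring

lemma cyclicRW_rowsum (hN : 3 ≤ N) (i : ZMod N) : ∑ j, cyclicRW N i j = 1 := by
  have h1 : (1 : ZMod N) ≠ 0 := by
    have : ((1:ℕ) : ZMod N) ≠ 0 := by
      rw [Ne, ZMod.natCast_eq_zero_iff]
      intro h; have := Nat.le_of_dvd one_pos h; omega
    simpa using this
  have h2 : (2 : ZMod N) ≠ 0 := by
    have : ((2:ℕ) : ZMod N) ≠ 0 := by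
      rw [Ne, ZMod.natCast_eq_zero_iff]
      intro h; have := Nat.le_of_dvd two_pos h; omega
    simpa using this
  have ha : i - 1 ≠ i := by intro h; apply h1; linear_combination -h
  have hb : i - 1 ≠ i + 1 := by intro h; apply h2; linear_combination -h
  have hc : (i : ZMod N) ≠ i + 1 := by intro h; apply h1; linear_combination -h
  have key : ∀ j, cyclicRW N i j =
      (if j = i - 1 then (1/3 : ℝ) else 0) + (if j = i then (1/3:ℝ) else 0)
        + (if j = i + 1 then (1/3:ℝ) else 0) := by
    intro j
    unfold cyclicRW
    by_cases e1 : j = i - 1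
    · subst e1; simp [ha, hb]
    · by_cases e2 : j = i
      · subst e2; simp [e1, hc]
      · by_cases e3 : j = i + 1
        · subst e3; simp [e1, e2]
        · simp [e1, e2, e3]
  simp only [key, Finset.sum_add_distrib, Finset.sum_ite_eq', Finset.mem_univ, if_true]
  norm_num


variable {N : ℕ} [NeZero N]

lemma pow_nonneg' (n : ℕ) (i j : ZMod N) : 0 ≤ (cyclicRW N ^ n) i j := by
  induction n generalizing i j with
  | zero => simp [Matrix.one_apply]; positivity
  | succ m ih =>
    rw [pow_succ, Matrix.mul_apply]
    exact Finset.sum_nonneg fun k _ => mul_nonneg (ih i k) (cyclicRW_nonneg k j)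

lemma pow_rowsum (hN : 3 ≤ N) (n : ℕ) (i : ZMod N) : ∑ j, (cyclicRW N ^ n) i j = 1 := by
  induction n generalizing i with
  | zero => simp [Matrix.one_apply]
  | succ m ih =>
    simp only [pow_succ, Matrix.mul_apply]
    rw [Finset.sum_comm]
    have : ∀ k : ZMod N, ∑ j, (cyclicRW N ^ m) i k * cyclicRW N k j
        = (cyclicRW N ^ m) i k := by
      intro k
      rw [← Finset.mul_sum, cyclicRW_rowsum hN, mul_one]
    simp only [this, ih]

lemma pow_colsum (hN : 3 ≤ N) (n : ℕ) (j : ZMod N) : ∑ i, (cyclicRW N ^ n) i j = 1 := by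
  have hsym : Matrix.transpose (cyclicRW N) = cyclicRW N := by
    ext a b; exact cyclicRW_symm b a
  have : ∀ i : ZMod N, (cyclicRW N ^ n) i j = (cyclicRW N ^ n) j i := by
    intro i
    have := congrArg (fun M => M j i) (Matrix.transpose_pow (cyclicRW N) n)
    simp only [Matrix.transpose_apply] at this
    rw [hsym] at this
    exact this
  simp only [this]
  exact pow_rowsum hN n j

lemma pow_entry_ge (hN : 3 ≤ N) : ∀ m : ℕ, ∀ (i : ZMod N) (d : ℤ), |d| ≤ (m : ℤ) →
    ((3:ℝ)⁻¹) ^ m ≤ (cyclicRW N ^ m) i (i + (d : ZMod N)) := by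
  intro m
  induction m with
  | zero =>
    intro i d hd
    have : d = 0 := by have := abs_le.mp hd; omega
    subst this
    simp [Matrix.one_apply]
  | succ m ih =>
    intro i d hd
    set e : ℤ := if 0 < d then 1 else if d < 0 then -1 else 0 with he
    have hde : |d - e| ≤ (m : ℤ) := by
      have hd' := abs_le.mp hd
      rw [he, abs_le]; split_ifs <;> constructor <;> omega
    have hP : cyclicRW N i (i + (e : ZMod N)) = 1/3 := by
      unfold cyclicRW
      rw [if_pos]
      rw [he]; split_ifs <;> push_cast <;> simp [sub_eq_add_neg]
    have hstep : (cyclicRW N ^ m) (i + (e : ZMod N)) (i + (d : ZMod N))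
        = (cyclicRW N ^ m) (i + (e : ZMod N)) ((i + (e : ZMod N)) + ((d - e : ℤ) : ZMod N)) := by
      congr 1
      push_cast
      ring
    have hrec := ih (i + (e : ZMod N)) (d - e) hde
    rw [← hstep] at hrec
    have hmul : (cyclicRW N ^ (m+1)) i (i + (d : ZMod N))
        = ∑ k, cyclicRW N i k * (cyclicRW N ^ m) k (i + (d : ZMod N)) := by
      rw [pow_succ', Matrix.mul_apply]
    rw [hmul]
    have hterm : cyclicRW N i (i + (e : ZMod N)) * (cyclicRW N ^ m) (i + (e : ZMod N)) (i + (d : ZMod N))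
        ≤ ∑ k, cyclicRW N i k * (cyclicRW N ^ m) k (i + (d : ZMod N)) := by
      apply Finset.single_le_sum (f := fun k => cyclicRW N i k * (cyclicRW N ^ m) k (i + (d : ZMod N)))
        (fun k _ => mul_nonneg (cyclicRW_nonneg i k) (pow_nonneg' m k _)) (Finset.mem_univ _)
    calc ((3:ℝ)⁻¹) ^ (m + 1) = 1/3 * ((3:ℝ)⁻¹)^m := by ring
    _ ≤ 1/3 * (cyclicRW N ^ m) (i + (e : ZMod N)) (i + (d : ZMod N)) := by
        apply mul_le_mul_of_nonneg_left hrec; norm_num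
    _ = cyclicRW N i (i + (e : ZMod N)) * (cyclicRW N ^ m) (i + (e : ZMod N)) (i + (d : ZMod N)) := by
        rw [hP]
    _ ≤ _ := hterm

lemma pow_entry_ge' (hN : 3 ≤ N) (i j : ZMod N) :
    ((3:ℝ)⁻¹) ^ (N - 1) ≤ (cyclicRW N ^ (N - 1)) i j := by
  have hd : |(ZMod.val (j - i) : ℤ)| ≤ ((N - 1 : ℕ) : ℤ) := by
    have := ZMod.val_lt (j - i)
    rw [abs_of_nonneg (Int.natCast_nonneg _)]
    omega
  have hj : i + (((ZMod.val (j - i) : ℤ) : ZMod N)) = j := by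
    push_cast
    rw [ZMod.natCast_val, ZMod.cast_id]
    ring
  have := pow_entry_ge hN (N - 1) i ((ZMod.val (j - i) : ℤ)) hd
  rwa [hj] at this


variable {N : ℕ} [NeZero N]

lemma contraction (Q : Matrix (ZMod N) (ZMod N) ℝ) (δ : ℝ) (hδ : 0 ≤ δ)
    (hmin : ∀ i j, δ ≤ Q i j) (hrow : ∀ i, ∑ j, Q i j = 1)
    (f : ZMod N → ℝ) (hf : ∑ i, f i = 0) :
    ∑ j, |∑ i, f i * Q i j| ≤ (1 - δ) * ∑ i, |f i| := by
  have key : ∀ j : ZMod N, |∑ i, f i * Q i j|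
      ≤ ∑ i, |f i| * (Q i j - if j = 0 then δ else 0) := by
    intro j
    have hc : ∀ i : ZMod N, (if j = (0 : ZMod N) then δ else 0) ≤ Q i j := by
      intro i
      split
      · exact hmin i j
      · exact le_trans hδ (hmin i j)
    have h1 : ∑ i, f i * (Q i j - if j = 0 then δ else 0)
        = (∑ i, f i * Q i j) - (∑ i, f i) * (if j = 0 then δ else 0) := by
      rw [Finset.sum_mul, ← Finset.sum_sub_distrib]
      apply Finset.sum_congr rfl
      intro i _
      ring
    rw [hf, zero_mul, sub_zero] at h1
    rw [← h1]
    refine le_trans (Finset.abs_sum_le_sum_abs _ _) ?_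
    apply Finset.sum_le_sum
    intro i _
    rw [abs_mul]
    have hnn : |Q i j - if j = 0 then δ else 0| = Q i j - if j = 0 then δ else 0 :=
      abs_of_nonneg (by linarith [hc i])
    rw [hnn]
  calc ∑ j, |∑ i, f i * Q i j|
      ≤ ∑ j, ∑ i, |f i| * (Q i j - if j = 0 then δ else 0) :=
        Finset.sum_le_sum fun j _ => key j
    _ = ∑ i, |f i| * (1 - δ) := by
        rw [Finset.sum_comm]
        apply Finset.sum_congr rfl
        intro i _
        rw [← Finset.mul_sum]
        congr 1
        rw [Finset.sum_sub_distrib, hrow i]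
        simp
    _ = (1 - δ) * ∑ i, |f i| := by
        rw [← Finset.sum_mul, mul_comm]

lemma abs_le_half (f : ZMod N → ℝ) (hf : ∑ i, f i = 0) (j : ZMod N) :
    |f j| ≤ (∑ i, |f i|) / 2 := by
  have hg : ∀ (g : ZMod N → ℝ), (∑ i, g i = 0) → g j ≤ (∑ i, |g i|) / 2 := by
    intro g hg0
    have h1 : ∀ i : ZMod N, 0 ≤ (g i + |g i|) / 2 := fun i => by
      have := neg_abs_le (g i); linarith
    have h2 : g j ≤ (g j + |g j|) / 2 := by have := le_abs_self (g j); linarith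
    have h3 : (g j + |g j|) / 2 ≤ ∑ i, (g i + |g i|) / 2 :=
      Finset.single_le_sum (fun i _ => h1 i) (Finset.mem_univ j)
    have h4 : ∑ i, (g i + |g i|) / 2 = (∑ i, |g i|) / 2 := by
      rw [← Finset.sum_div, Finset.sum_add_distrib, hg0, zero_add]
    linarith
  rw [abs_le]
  constructor
  · have := hg (fun i => -f i) (by rw [Finset.sum_neg_distrib, hf, neg_zero])
    simp only [abs_neg] at this
    linarith
  · exact hg f hf

end aux

/-- For `N ≥ 3` and any nonnegative vector `λ⁰` on `ℤ/Nℤ` with total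
mass `K > 0`, setting `λⁿ_j = Σ_i λ⁰_i (P^n)(i,j)`, we have
`|λⁿ_j − K/N| ≤ K·((3^{N−1} − 1)/3^{N−1})^{(n/(N−1))−1}` (real exponent)
for every `n ≥ 1` and every state `j`. -/
theorem cyclicRW_mass_convergence (N : ℕ) [NeZero N] (hN : 3 ≤ N)
    (lam0 : ZMod N → ℝ) (hlam0_nonneg : ∀ i, 0 ≤ lam0 i)
    (K : ℝ) (hK : 0 < K) (hlam0_sum : ∑ i, lam0 i = K) :
    ∀ n : ℕ, 1 ≤ n → ∀ j : ZMod N,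
      |(∑ i, lam0 i * (cyclicRW N ^ n) i j) - K / (N : ℝ)| ≤
        K * (((3 : ℝ) ^ (N - 1) - 1) / (3 : ℝ) ^ (N - 1)) ^ ((n : ℝ) / ((N : ℝ) - 1) - 1) := by
  intro n _hn j
  have hNR : (3:ℝ) ≤ (N:ℝ) := by exact_mod_cast hN
  have hNR0 : (0:ℝ) < (N:ℝ) := by linarith
  set δ : ℝ := (3:ℝ)⁻¹ ^ (N - 1) with hδdef
  have hδ0 : 0 < δ := by positivity
  have hδ1 : δ < 1 := by
    apply pow_lt_one₀ (by norm_num) (by norm_num) (by omega)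
  set c : ℝ := 1 - δ with hcdef
  have hc0 : 0 < c := by rw [hcdef]; linarith
  have hc1 : c ≤ 1 := by rw [hcdef]; linarith
  set f0 : ZMod N → ℝ := fun i => lam0 i - K / N with hf0def
  have hf0sum : ∑ i, f0 i = 0 := by
    simp only [hf0def, Finset.sum_sub_distrib, hlam0_sum, Finset.sum_const,
      Finset.card_univ, ZMod.card, nsmul_eq_mul]
    field_simp
    ring
  set g : ℕ → ZMod N → ℝ := fun n j => ∑ i, f0 i * (cyclicRW N ^ n) i j with hgdef
  have hgsum : ∀ m, ∑ k, g m k = 0 := by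
    intro m
    rw [hgdef]
    simp only
    rw [Finset.sum_comm]
    simp only [← Finset.mul_sum, pow_rowsum hN, mul_one]
    exact hf0sum
  have hgstep : ∀ a b (k : ZMod N), g (a + b) k = ∑ l, g a l * (cyclicRW N ^ b) l k := by
    intro a b k
    simp only [hgdef, pow_add, Matrix.mul_apply, Finset.mul_sum, Finset.sum_mul]
    rw [Finset.sum_comm]
    apply Finset.sum_congr rfl
    intro l _
    apply Finset.sum_congr rfl
    intro i _
    ring
  have hg0 : ∀ k, g 0 k = f0 k := by
    intro k
    simp only [hgdef, pow_zero, Matrix.one_apply, mul_ite, mul_one, mul_zero]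
    rw [Finset.sum_ite_eq' Finset.univ k f0]
    simp
  have hL1start : ∑ k, |g 0 k| ≤ 2 * K := by
    simp only [hg0]
    have hb : ∀ i : ZMod N, |f0 i| ≤ lam0 i + K / N := by
      intro i
      have h1 := hlam0_nonneg i
      have h2 : 0 ≤ K / (N:ℝ) := by positivity
      rw [hf0def, abs_le]
      constructor <;> simp only <;> linarith
    calc ∑ k, |f0 k| ≤ ∑ k : ZMod N, (lam0 k + K / N) := Finset.sum_le_sum fun k _ => hb k
      _ = K + K := by
          rw [Finset.sum_add_distrib, hlam0_sum, Finset.sum_const, Finset.card_univ,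
            ZMod.card, nsmul_eq_mul]
          congr 1
          field_simp
      _ = 2 * K := by ring
  have hdecay : ∀ m, ∑ k, |g (m * (N - 1)) k| ≤ c ^ m * (2 * K) := by
    intro m
    induction m with
    | zero => simpa using hL1start
    | succ m ih =>
      have heq : (m + 1) * (N - 1) = m * (N - 1) + (N - 1) := by ring
      have hrw : ∀ k, g ((m+1) * (N-1)) k
          = ∑ l, g (m * (N-1)) l * (cyclicRW N ^ (N-1)) l k := by
        intro k; rw [heq]; exact hgstep _ _ k
      calc ∑ k, |g ((m+1)*(N-1)) k|
          = ∑ k, |∑ l, g (m*(N-1)) l * (cyclicRW N ^ (N-1)) l k| := by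
            simp only [hrw]
        _ ≤ (1 - δ) * ∑ l, |g (m*(N-1)) l| :=
            contraction _ δ (le_of_lt hδ0) (fun i j => pow_entry_ge' hN i j)
              (pow_rowsum hN _) _ (hgsum _)
        _ ≤ c * (c ^ m * (2*K)) := by
            rw [← hcdef]
            exact mul_le_mul_of_nonneg_left ih (le_of_lt hc0)
        _ = c ^ (m+1) * (2*K) := by ring
  set m := n / (N - 1) with hmdef
  have hnL1 : ∑ k, |g n k| ≤ c ^ m * (2 * K) := by
    have hsplit : n = m * (N - 1) + n % (N - 1) := by
      rw [hmdef, mul_comm]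
      exact (Nat.div_add_mod n (N-1)).symm
    have hrw : ∀ k, g n k = ∑ l, g (m * (N-1)) l * (cyclicRW N ^ (n % (N-1))) l k := by
      intro k
      conv_lhs => rw [hsplit]
      exact hgstep _ _ k
    calc ∑ k, |g n k|
        = ∑ k, |∑ l, g (m*(N-1)) l * (cyclicRW N ^ (n % (N-1))) l k| := by
          simp only [hrw]
      _ ≤ (1 - 0) * ∑ l, |g (m*(N-1)) l| :=
          contraction _ 0 le_rfl (fun i j => pow_nonneg' _ i j) (pow_rowsum hN _) _ (hgsum _)
      _ ≤ c ^ m * (2*K) := by rw [sub_zero, one_mul]; exact hdecay m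
  have hpoint : |g n j| ≤ K * c ^ m := by
    have h := abs_le_half (g n) (hgsum n) j
    calc |g n j| ≤ (∑ k, |g n k|) / 2 := h
      _ ≤ (c ^ m * (2*K)) / 2 := by linarith
      _ = K * c ^ m := by ring
  have hLHS : (∑ i, lam0 i * (cyclicRW N ^ n) i j) - K / N = g n j := by
    rw [hgdef]
    simp only [hf0def, sub_mul, Finset.sum_sub_distrib]
    congr 1
    rw [← Finset.mul_sum, pow_colsum hN, mul_one]
  have hbase : ((3:ℝ) ^ (N-1) - 1) / (3:ℝ) ^ (N-1) = c := by
    rw [hcdef, hδdef, inv_pow]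
    have h3 : ((3:ℝ) ^ (N-1)) ≠ 0 := by positivity
    field_simp
  have hNcast : ((N - 1 : ℕ) : ℝ) = (N : ℝ) - 1 := by
    have h1 : (1:ℕ) ≤ N := by omega
    push_cast [h1]
    ring
  have hexp : (n : ℝ) / ((N:ℝ) - 1) - 1 ≤ (m : ℝ) := by
    have e2 : n % (N-1) < N - 1 := Nat.mod_lt _ (by omega)
    have e1 : (N-1) * m + n % (N-1) = n := by rw [hmdef]; exact Nat.div_add_mod n (N-1)
    have e3 : (N-1) * (m + 1) = (N-1) * m + (N-1) := by ring
    have h1 : n < (N - 1) * (m + 1) := by omega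
    have h2 : (n:ℝ) < ((N:ℝ) - 1) * ((m:ℝ) + 1) := by
      rw [← hNcast]
      exact_mod_cast h1
    have h3 : (0:ℝ) < (N:ℝ) - 1 := by linarith
    rw [sub_le_iff_le_add, div_le_iff₀ h3]
    nlinarith
  have hrpow : c ^ m ≤ c ^ ((n : ℝ) / ((N:ℝ) - 1) - 1) := by
    rw [← Real.rpow_natCast c m]
    exact Real.rpow_le_rpow_of_exponent_ge hc0 hc1 hexp
  rw [hLHS, hbase]
  calc |g n j| ≤ K * c ^ m := hpoint
    _ ≤ K * c ^ ((n:ℝ)/((N:ℝ)-1) - 1) := mul_le_mul_of_nonneg_left hrpow (le_of_lt hK)
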